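/- Let p be a prime number and λ an infinite cardinal. If G is an abelian group with |G| = λ such that every abelian group H with |H| ≤ λ admits a pure embedding into G, then the p-torsion subgroup t_p(G) = { g ∈ G : p^n g = 0 for some n ∈ ℕ } is an abelian p-group of cardinality λ such that every abelian p-group H with |H| ≤ λ admits a pure embedding into t_p(G). -/
import Mathlib


/-- An abelian `p`-group: every element has order `p ^ n` for some `n`. -/
def IsAbelianPGroup (p : ℕ) (G : Type) [AddCommGroup G] : Prop :=
  ∀ g : G, ∃ n : ℕ, p ^ n • g = 0

/-- A pure embedding: an injective group homomorphism whose image is a pure subgroup. -/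
def IsPureEmbedding {G U : Type} [AddCommGroup G] [AddCommGroup U] (f : G →+ U) : Prop :=
  Function.Injective f ∧ ∀ (n : ℕ) (g : G), (∃ u : U, n • u = f g) → ∃ g' : G, n • g' = g

/-- The `p`-torsion subgroup `t_p(G) = { g ∈ G | p ^ n • g = 0 for some n }`. -/
def pTorsion (p : ℕ) (G : Type) [AddCommGroup G] : AddSubgroup G where
  carrier := {g : G | ∃ n : ℕ, p ^ n • g = 0}
  zero_mem' := ⟨0, smul_zero _⟩
  add_mem' := by
    rintro a b ⟨m, hm⟩ ⟨n, hn⟩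
    refine ⟨m + n, ?_⟩
    have ha : p ^ (m + n) • a = 0 := by
      rw [pow_add, mul_comm, mul_smul, hm, smul_zero]
    have hb : p ^ (m + n) • b = 0 := by
      rw [pow_add, mul_smul, hn, smul_zero]
    rw [smul_add, ha, hb, add_zero]
  neg_mem' := by
    rintro a ⟨n, hn⟩
    exact ⟨n, by rw [smul_neg, hn, neg_zero]⟩

theorem pTorsion_of_universal_is_universal (p : ℕ) (hp : p.Prime)
    (lam : Cardinal) (hlam : Cardinal.aleph0 ≤ lam)
    (G : Type) [AddCommGroup G] (hG : Cardinal.mk G = lam)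
    (huniv : ∀ (H : Type) (_ : AddCommGroup H), Cardinal.mk H ≤ lam →
      ∃ f : H →+ G, IsPureEmbedding f) :
    IsAbelianPGroup p ↥(pTorsion p G) ∧ Cardinal.mk ↥(pTorsion p G) = lam ∧
      ∀ (H : Type) (_ : AddCommGroup H), IsAbelianPGroup p H → Cardinal.mk H ≤ lam →
        ∃ f : H →+ ↥(pTorsion p G), IsPureEmbedding f := by
  haveI : Fact p.Prime := ⟨hp⟩
  -- general: a pure embedding from a p-group lands in pTorsion, restrict it
  have key : ∀ (H : Type) (_ : AddCommGroup H), IsAbelianPGroup p H → Cardinal.mk H ≤ lam →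
      ∃ f : H →+ ↥(pTorsion p G), IsPureEmbedding f := by
    intro H _ hHp hHle
    obtain ⟨f, hfi, hfp⟩ := huniv H ‹_› hHle
    have hmem : ∀ h : H, f h ∈ pTorsion p G := by
      intro h
      obtain ⟨n, hn⟩ := hHp h
      exact ⟨n, by rw [← map_nsmul, hn, map_zero]⟩
    refine ⟨f.codRestrict (pTorsion p G) hmem, ?_, ?_⟩
    · intro a b hab
      apply hfi
      exact congrArg Subtype.val hab
    · rintro n g ⟨u, hu⟩
      refine hfp n g ⟨(u : G), ?_⟩
      have := congrArg Subtype.val hu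
      simpa using this
  refine ⟨?_, ?_, key⟩
  · rintro ⟨g, n, hn⟩
    exact ⟨n, Subtype.ext (by simpa using hn)⟩
  · -- cardinality
    apply le_antisymm
    · rw [← hG]
      exact Cardinal.mk_subtype_le _
    · -- embed a p-group of size lam
      haveI : Infinite lam.out := by
        rw [Cardinal.infinite_iff, Cardinal.mk_out]; exact hlam
      set H := lam.out →₀ ZMod p with hH
      have hcard : Cardinal.mk H = lam := by
        rw [hH, Cardinal.mk_finsupp_of_infinite, Cardinal.mk_out]
        exact max_eq_left ((Cardinal.mk_le_aleph0).trans hlam)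
      have hHp : IsAbelianPGroup p H := by
        intro h
        refine ⟨1, ?_⟩
        rw [pow_one]
        ext x
        change p • h x = 0
        simp [nsmul_eq_mul, ZMod.natCast_self]
      obtain ⟨f, hfi, _⟩ := key H inferInstance hHp hcard.le
      calc lam = Cardinal.mk H := hcard.symm
        _ ≤ Cardinal.mk ↥(pTorsion p G) := Cardinal.mk_le_of_injective hfi
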